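/- Monotonicity of the two-parameter Rényi conditional entropy under discarding information: let P_XYZ be a probability distribution on 𝒳×𝒴×𝒵. For all α, β ∈ (0,∞), H̃_{α,β}(XY|Z)_{P_XYZ} ≥ H̃_{α,β}(Y|Z)_{P_YZ}, where H̃_{α,β}(XY|Z) is computed treating (X,Y) as the joint variable on 𝒳×𝒴 conditioned on Z, and P_YZ is the marginal of P_XYZ on 𝒴×𝒵. -/

import Mathlib

open scoped BigOperators

noncomputable section

variable {𝓧 𝓨 : Type*} [Fintype 𝓧] [Fintype 𝓨]

/-- Marginal distribution of the second component. -/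
def pY (P : 𝓧 × 𝓨 → ℝ) (y : 𝓨) : ℝ := ∑ x, P (x, y)

/-- Conditional distribution `P_{X|Y}(x|y)`. -/
def pCond (P : 𝓧 × 𝓨 → ℝ) (x : 𝓧) (y : 𝓨) : ℝ := P (x, y) / pY P y

/-- Two-parameter Rényi conditional entropy `H̃_{α,β}(X|Y)` for `α ≠ 1`. -/
def Htilde (P : 𝓧 × 𝓨 → ℝ) (α β : ℝ) : ℝ :=
  α / (β * (1 - α)) *
    Real.logb 2 (∑ y, if 0 < pY P y then
      pY P y * (∑ x, pCond P x y ^ α) ^ (β / α) else 0)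

/-- Shannon conditional entropy `H(X|Y)`. -/
def shannonCond (P : 𝓧 × 𝓨 → ℝ) : ℝ :=
  -∑ p, if 0 < P p then P p * Real.logb 2 (pCond P p.1 p.2) else 0

/-- Two-parameter Rényi conditional entropy, continuously extended at `α = 1`. -/
def HtildeE (P : 𝓧 × 𝓨 → ℝ) (α β : ℝ) : ℝ :=
  if α = 1 then shannonCond P else Htilde P α β

lemma rpow_add_le_of_one_le' {p : ℝ} (hp : 1 ≤ p) {x y : ℝ} (hx : 0 ≤ x) (hy : 0 ≤ y) :
    x ^ p + y ^ p ≤ (x + y) ^ p := by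
  lift x to NNReal using hx
  lift y to NNReal using hy
  exact_mod_cast NNReal.add_rpow_le_rpow_add x y hp

lemma add_rpow_le_of_le_one' {p : ℝ} (hp0 : 0 ≤ p) (hp : p ≤ 1) {x y : ℝ} (hx : 0 ≤ x)
    (hy : 0 ≤ y) : (x + y) ^ p ≤ x ^ p + y ^ p := by
  lift x to NNReal using hx
  lift y to NNReal using hy
  exact_mod_cast NNReal.rpow_add_le_add_rpow x y hp0 hp

lemma sum_rpow_le_rpow_sum' {ι : Type*} (s : Finset ι) (f : ι → ℝ) (hf : ∀ i ∈ s, 0 ≤ f i)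
    {p : ℝ} (hp : 1 ≤ p) : ∑ i ∈ s, f i ^ p ≤ (∑ i ∈ s, f i) ^ p := by
  classical
  induction s using Finset.cons_induction with
  | empty => simp [Real.zero_rpow (by linarith : p ≠ 0)]
  | cons a s ha ih =>
    rw [Finset.sum_cons, Finset.sum_cons]
    have h1 : 0 ≤ f a := hf a (Finset.mem_cons_self a s)
    have h2 : ∀ i ∈ s, 0 ≤ f i := fun i hi => hf i (Finset.mem_cons_of_mem hi)
    calc f a ^ p + ∑ i ∈ s, f i ^ p ≤ f a ^ p + (∑ i ∈ s, f i) ^ p := by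
          linarith [ih h2]
      _ ≤ (f a + ∑ i ∈ s, f i) ^ p :=
          rpow_add_le_of_one_le' hp h1 (Finset.sum_nonneg h2)

lemma rpow_sum_le_sum_rpow' {ι : Type*} (s : Finset ι) (f : ι → ℝ) (hf : ∀ i ∈ s, 0 ≤ f i)
    {p : ℝ} (hp0 : 0 < p) (hp : p ≤ 1) : (∑ i ∈ s, f i) ^ p ≤ ∑ i ∈ s, f i ^ p := by
  classical
  induction s using Finset.cons_induction with
  | empty => simp [Real.zero_rpow (ne_of_gt hp0)]
  | cons a s ha ih =>
    rw [Finset.sum_cons, Finset.sum_cons]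
    have h1 : 0 ≤ f a := hf a (Finset.mem_cons_self a s)
    have h2 : ∀ i ∈ s, 0 ≤ f i := fun i hi => hf i (Finset.mem_cons_of_mem hi)
    calc (f a + ∑ i ∈ s, f i) ^ p ≤ f a ^ p + (∑ i ∈ s, f i) ^ p :=
          add_rpow_le_of_le_one' hp0.le hp h1 (Finset.sum_nonneg h2)
      _ ≤ f a ^ p + ∑ i ∈ s, f i ^ p := by linarith [ih h2]

set_option maxHeartbeats 2000000 in
/-- monotonicity under discarding information:
`H̃_{α,β}(XY|Z) ≥ H̃_{α,β}(Y|Z)` for all `α, β ∈ (0,∞)`. -/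
theorem HtildeE_discarding
    {𝓩 : Type*} [Fintype 𝓩] [Nonempty 𝓧] [Nonempty 𝓨] [Nonempty 𝓩]
    (P : 𝓧 × 𝓨 × 𝓩 → ℝ) (hP : ∀ p, 0 ≤ P p) (hPsum : ∑ p, P p = 1)
    (α β : ℝ) (hα : 0 < α) (hβ : 0 < β) :
    HtildeE (fun p : (𝓧 × 𝓨) × 𝓩 => P (p.1.1, p.1.2, p.2)) α β ≥
      HtildeE (fun q : 𝓨 × 𝓩 => ∑ x, P (x, q.1, q.2)) α β := by
  classical
  set PW : (𝓧 × 𝓨) × 𝓩 → ℝ := fun p => P (p.1.1, p.1.2, p.2) with hPWdef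
  set Q : 𝓨 × 𝓩 → ℝ := fun q => ∑ x, P (x, q.1, q.2) with hQdef
  have hPWnn : ∀ p, 0 ≤ PW p := fun p => hP _
  have hQnn : ∀ q, 0 ≤ Q q := fun q => Finset.sum_nonneg fun x _ => hP _
  -- the marginal on 𝓩 is the same for both
  have hpZ : ∀ z, pY Q z = pY PW z := by
    intro z
    simp only [pY, hQdef, hPWdef]
    rw [Fintype.sum_prod_type]
    exact Finset.sum_comm
  -- positivity of the 𝓩-marginal implies pY PW z positive somewhere
  have hsumZ : ∑ z, pY PW z = 1 := by
    simp only [pY]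
    rw [Finset.sum_comm]
    rw [← Fintype.sum_prod_type]
    rw [← hPsum]
    exact Fintype.sum_equiv (Equiv.prodAssoc 𝓧 𝓨 𝓩) _ _ (fun p => rfl)
  have hz0 : ∃ z, 0 < pY PW z := by
    by_contra h
    push_neg at h
    have : ∑ z, pY PW z ≤ 0 := Finset.sum_nonpos fun z _ => h z
    rw [hsumZ] at this; linarith
  -- P(x,y,z) ≤ Q(y,z)
  have hPleQ : ∀ x y z, P (x, y, z) ≤ Q (y, z) := fun x y z =>
    Finset.single_le_sum (f := fun x => P (x, y, z)) (fun i _ => hP _) (Finset.mem_univ x)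
  -- PW (w, z) ≤ pY PW z
  have hPWle : ∀ (w : 𝓧 × 𝓨) (z : 𝓩), PW (w, z) ≤ pY PW z := fun w z =>
    Finset.single_le_sum (f := fun w => PW (w, z)) (fun i _ => hPWnn _) (Finset.mem_univ w)
  have hQle : ∀ y z, Q (y, z) ≤ pY PW z := by
    intro y z
    rw [← hpZ]
    exact Finset.single_le_sum (f := fun y => Q (y, z)) (fun i _ => hQnn _) (Finset.mem_univ y)
  rw [HtildeE, HtildeE]
  by_cases h1 : α = 1
  · -- Shannon case
    rw [if_pos h1, if_pos h1, shannonCond, shannonCond, ge_iff_le, neg_le_neg_iff]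
    have key : ∀ y z,
        ∑ x, (if 0 < PW ((x, y), z) then
            PW ((x, y), z) * Real.logb 2 (pCond PW ((x, y), z).1 ((x, y), z).2) else 0)
        ≤ (if 0 < Q (y, z) then Q (y, z) * Real.logb 2 (pCond Q (y, z).1 (y, z).2) else 0) := by
      intro y z
      by_cases hQpos : 0 < Q (y, z)
      · rw [if_pos hQpos]
        have hQeq : Q (y, z) = ∑ x, P (x, y, z) := rfl
        simp only [pCond]
        rw [hQeq, Finset.sum_mul]
        apply Finset.sum_le_sum
        intro x _
        by_cases hPpos : 0 < PW ((x, y), z)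
        · rw [if_pos hPpos]
          have hpZpos : 0 < pY PW z := lt_of_lt_of_le hPpos (hPWle (x, y) z)
          have h2 : (0:ℝ) < PW ((x, y), z) / pY PW z := div_pos hPpos hpZpos
          have h3 : PW ((x, y), z) / pY PW z ≤ Q (y, z) / pY Q z := by
            rw [hpZ]
            exact div_le_div_of_nonneg_right (hPleQ x y z) hpZpos.le
          have h4 : Real.logb 2 (PW ((x, y), z) / pY PW z)
              ≤ Real.logb 2 (Q (y, z) / pY Q z) :=
            Real.logb_le_logb_of_le one_lt_two h2 h3
          calc PW ((x, y), z) * Real.logb 2 (PW ((x, y), z) / pY PW z)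
              ≤ PW ((x, y), z) * Real.logb 2 (Q (y, z) / pY Q z) :=
                mul_le_mul_of_nonneg_left h4 (hPWnn _)
            _ = P (x, y, z) * Real.logb 2 (Q (y, z) / pY Q z) := rfl
        · rw [if_neg hPpos]
          have hz : P (x, y, z) = 0 := le_antisymm (not_lt.mp hPpos) (hP _)
          rw [hz, zero_mul]
      · rw [if_neg hQpos]
        have hQ0 : Q (y, z) = 0 := le_antisymm (not_lt.mp hQpos) (hQnn _)
        have hall : ∀ x, P (x, y, z) = 0 := by
          intro x
          have := (Finset.sum_eq_zero_iff_of_nonneg (fun i _ => hP (i, y, z))).mp hQ0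
          exact this x (Finset.mem_univ x)
        apply le_of_eq
        apply Finset.sum_eq_zero
        intro x _
        have : ¬ 0 < PW ((x, y), z) := by
          simp only [hPWdef]; rw [hall x]; exact lt_irrefl 0
        rw [if_neg this]
    calc ∑ w : (𝓧 × 𝓨) × 𝓩,
          (if 0 < PW w then PW w * Real.logb 2 (pCond PW w.1 w.2) else 0)
        = ∑ xy : 𝓧 × 𝓨, ∑ z, (if 0 < PW (xy, z) then
            PW (xy, z) * Real.logb 2 (pCond PW (xy, z).1 (xy, z).2) else 0) :=
          Fintype.sum_prod_type _
      _ = ∑ x, ∑ y, ∑ z, (if 0 < PW ((x, y), z) then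
            PW ((x, y), z) * Real.logb 2 (pCond PW ((x, y), z).1 ((x, y), z).2) else 0) := by
          rw [Fintype.sum_prod_type]
      _ = ∑ y, ∑ x, ∑ z, (if 0 < PW ((x, y), z) then
            PW ((x, y), z) * Real.logb 2 (pCond PW ((x, y), z).1 ((x, y), z).2) else 0) :=
          Finset.sum_comm
      _ = ∑ y, ∑ z, ∑ x, (if 0 < PW ((x, y), z) then
            PW ((x, y), z) * Real.logb 2 (pCond PW ((x, y), z).1 ((x, y), z).2) else 0) :=
          Finset.sum_congr rfl fun y _ => Finset.sum_comm
      _ ≤ ∑ y, ∑ z, (if 0 < Q (y, z) then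
            Q (y, z) * Real.logb 2 (pCond Q (y, z).1 (y, z).2) else 0) :=
          Finset.sum_le_sum fun y _ => Finset.sum_le_sum fun z _ => key y z
      _ = ∑ q : 𝓨 × 𝓩, (if 0 < Q q then Q q * Real.logb 2 (pCond Q q.1 q.2) else 0) :=
          (Fintype.sum_prod_type
            (f := fun q : 𝓨 × 𝓩 => if 0 < Q q then Q q * Real.logb 2 (pCond Q q.1 q.2) else 0)).symm
  · -- Rényi case
    rw [if_neg h1, if_neg h1, Htilde, Htilde]
    set A : 𝓩 → ℝ := fun z => ∑ w : 𝓧 × 𝓨, pCond PW w z ^ α with hAdef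
    set B : 𝓩 → ℝ := fun z => ∑ y, pCond Q y z ^ α with hBdef
    have hAnn : ∀ z, 0 ≤ A z := fun z =>
      Finset.sum_nonneg fun w _ => Real.rpow_nonneg (div_nonneg (hPWnn _) (by
        exact Finset.sum_nonneg fun i _ => hPWnn _)) _
    have hBnn : ∀ z, 0 ≤ B z := fun z =>
      Finset.sum_nonneg fun y _ => Real.rpow_nonneg (div_nonneg (hQnn _) (by
        rw [hpZ]; exact Finset.sum_nonneg fun i _ => hPWnn _)) _
    have hApos : ∀ z, 0 < pY PW z → 0 < A z := by
      intro z hz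
      have : ∃ w : 𝓧 × 𝓨, 0 < PW (w, z) := by
        by_contra h
        push_neg at h
        have : pY PW z ≤ 0 := Finset.sum_nonpos fun w _ => h w
        linarith
      obtain ⟨w, hw⟩ := this
      apply Finset.sum_pos' (fun i _ => Real.rpow_nonneg (div_nonneg (hPWnn _) hz.le) _)
      exact ⟨w, Finset.mem_univ w, Real.rpow_pos_of_pos (div_pos hw hz) _⟩
    have hBpos : ∀ z, 0 < pY PW z → 0 < B z := by
      intro z hz
      have hzQ : 0 < pY Q z := by rw [hpZ]; exact hz
      have : ∃ y, 0 < Q (y, z) := by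
        by_contra h
        push_neg at h
        have : pY Q z ≤ 0 := Finset.sum_nonpos fun y _ => h y
        linarith
      obtain ⟨y, hy⟩ := this
      apply Finset.sum_pos' (fun i _ => Real.rpow_nonneg (div_nonneg (hQnn _) hzQ.le) _)
      exact ⟨y, Finset.mem_univ y, Real.rpow_pos_of_pos (div_pos hy hzQ) _⟩
    -- rewrite B z in terms of the sums of P
    have hBA_lt : α < 1 → ∀ z, 0 < pY PW z → B z ≤ A z := by
      intro hα1 z hz
      have hA' : A z = ∑ y, ∑ x, (P (x, y, z) / pY PW z) ^ α := by
        simp only [hAdef, pCond, hPWdef]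
        rw [Fintype.sum_prod_type]
        exact Finset.sum_comm
      have hB' : B z = ∑ y, (∑ x, P (x, y, z) / pY PW z) ^ α := by
        simp only [hBdef, pCond, hQdef, hpZ]
        congr 1; ext y; rw [Finset.sum_div, ← hpZ]
      rw [hA', hB']
      apply Finset.sum_le_sum
      intro y _
      rw [show (∑ x, P (x, y, z) / pY PW z) = ∑ x, (P (x, y, z) / pY PW z) from rfl]
      exact rpow_sum_le_sum_rpow' _ _ (fun i _ => div_nonneg (hP _) hz.le) hα hα1.le
    have hAB_gt : 1 < α → ∀ z, 0 < pY PW z → A z ≤ B z := by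
      intro hα1 z hz
      have hA' : A z = ∑ y, ∑ x, (P (x, y, z) / pY PW z) ^ α := by
        simp only [hAdef, pCond, hPWdef]
        rw [Fintype.sum_prod_type]
        exact Finset.sum_comm
      have hB' : B z = ∑ y, (∑ x, P (x, y, z) / pY PW z) ^ α := by
        simp only [hBdef, pCond, hQdef, hpZ]
        congr 1; ext y; rw [Finset.sum_div, ← hpZ]
      rw [hA', hB']
      apply Finset.sum_le_sum
      intro y _
      exact sum_rpow_le_rpow_sum' _ _ (fun i _ => div_nonneg (hP _) hz.le) hα1.le
    set S1 : ℝ := ∑ z, if 0 < pY PW z then pY PW z * (A z) ^ (β / α) else 0 with hS1def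
    set S2 : ℝ := ∑ z, if 0 < pY Q z then pY Q z * (B z) ^ (β / α) else 0 with hS2def
    have hS2' : S2 = ∑ z, if 0 < pY PW z then pY PW z * (B z) ^ (β / α) else 0 := by
      rw [hS2def]
      exact Finset.sum_congr rfl fun z _ => by rw [hpZ]
    obtain ⟨z0, hz0⟩ := hz0
    have hS1pos : 0 < S1 := by
      rw [hS1def]
      apply Finset.sum_pos'
      · intro z _
        split
        · exact mul_nonneg (by positivity) (Real.rpow_nonneg (hAnn z) _)
        · exact le_rfl
      · refine ⟨z0, Finset.mem_univ z0, ?_⟩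
        rw [if_pos hz0]
        exact mul_pos hz0 (Real.rpow_pos_of_pos (hApos z0 hz0) _)
    have hS2pos : 0 < S2 := by
      rw [hS2']
      apply Finset.sum_pos'
      · intro z _
        split
        · next hz => exact mul_nonneg hz.le (Real.rpow_nonneg (hBnn z) _)
        · exact le_rfl
      · refine ⟨z0, Finset.mem_univ z0, ?_⟩
        rw [if_pos hz0]
        exact mul_pos hz0 (Real.rpow_pos_of_pos (hBpos z0 hz0) _)
    rcases lt_or_gt_of_ne h1 with hα1 | hα1
    · -- α < 1 : S2 ≤ S1, coefficient positive
      have hS : S2 ≤ S1 := by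
        rw [hS2', hS1def]
        apply Finset.sum_le_sum
        intro z _
        by_cases hz : 0 < pY PW z
        · rw [if_pos hz, if_pos hz]
          apply mul_le_mul_of_nonneg_left _ hz.le
          exact Real.rpow_le_rpow (hBnn z) (hBA_lt hα1 z hz) (by positivity)
        · rw [if_neg hz, if_neg hz]
      have hc : 0 < α / (β * (1 - α)) := div_pos hα (mul_pos hβ (by linarith))
      have hlog : Real.logb 2 S2 ≤ Real.logb 2 S1 :=
        Real.logb_le_logb_of_le one_lt_two hS2pos hS
      exact mul_le_mul_of_nonneg_left hlog hc.le
    · -- α > 1 : S1 ≤ S2, coefficient negative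
      have hS : S1 ≤ S2 := by
        rw [hS2', hS1def]
        apply Finset.sum_le_sum
        intro z _
        by_cases hz : 0 < pY PW z
        · rw [if_pos hz, if_pos hz]
          apply mul_le_mul_of_nonneg_left _ hz.le
          exact Real.rpow_le_rpow (hAnn z) (hAB_gt hα1 z hz) (by positivity)
        · rw [if_neg hz, if_neg hz]
      have hc : α / (β * (1 - α)) ≤ 0 :=
        (div_nonpos_iff.mpr (Or.inl ⟨hα.le, (mul_neg_of_pos_of_neg hβ (by linarith)).le⟩))
      have hlog : Real.logb 2 S1 ≤ Real.logb 2 S2 :=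
        Real.logb_le_logb_of_le one_lt_two hS1pos hS
      exact mul_le_mul_of_nonpos_left hlog hc
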